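/- arXiv:2103.00674 — 2 statements merged into one kernel-verified Lean document; each statement's English description precedes it below -/
import Mathlib

section
/- With the same setup (all p_k > 0), (1/N^2) ∑_{k=1}^N p_k^{-1} = 1 + μ^T (Σ_μ - μ μ^T)^{-1} μ, where Σ_μ - μ μ^T is the covariance matrix of the nontrivial interactions. -/
open Matrix Finset

def sylvesterHadamard (m : ℕ) : Matrix (Fin m → Bool) (Fin m → Bool) ℝ :=
  fun S k => ∏ i : Fin m, if S i ∧ k i then (-1 : ℝ) else 1

lemma SH_symm (m : ℕ) (S k : Fin m → Bool) :
    sylvesterHadamard m S k = sylvesterHadamard m k S := by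
  simp [sylvesterHadamard, and_comm]

lemma SH_zero (m : ℕ) (k : Fin m → Bool) :
    sylvesterHadamard m (fun _ => false) k = 1 := by
  simp [sylvesterHadamard]

lemma SH_zero' (m : ℕ) (k : Fin m → Bool) :
    sylvesterHadamard m k (fun _ => false) = 1 := by
  rw [SH_symm, SH_zero]

lemma SH_mul_self (m : ℕ) :
    sylvesterHadamard m * sylvesterHadamard m = ((2:ℝ)^m) • 1 := by
  ext S T
  rw [Matrix.mul_apply]
  have h1 : ∀ k, sylvesterHadamard m S k * sylvesterHadamard m k T
      = ∏ i : Fin m, ((if S i ∧ k i then (-1:ℝ) else 1) * (if T i ∧ k i then (-1:ℝ) else 1)) := by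
    intro k
    rw [SH_symm m k T]
    unfold sylvesterHadamard
    rw [← Finset.prod_mul_distrib]
  simp_rw [h1]
  rw [← Fintype.prod_sum (fun i (b : Bool) => (if S i ∧ b then (-1:ℝ) else 1) * (if T i ∧ b then (-1:ℝ) else 1))]
  by_cases hST : S = T
  · subst hST
    have : ∀ i : Fin m, ∑ b : Bool, (if S i ∧ b then (-1:ℝ) else 1) * (if S i ∧ b then (-1:ℝ) else 1) = 2 := by
      intro i; cases h : S i <;> simp [h] <;> norm_num
    rw [Finset.prod_congr rfl (fun i _ => this i)]
    simp [Matrix.one_apply]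
  · obtain ⟨i, hi⟩ : ∃ i, S i ≠ T i := by
      by_contra h; push_neg at h; exact hST (funext h)
    have : ∑ b : Bool, (if S i ∧ b then (-1:ℝ) else 1) * (if T i ∧ b then (-1:ℝ) else 1) = 0 := by
      cases h1 : S i <;> cases h2 : T i <;> simp [h1, h2] at hi ⊢ <;> norm_num
    rw [Finset.prod_eq_zero (Finset.mem_univ i) this]
    simp [Matrix.one_apply, hST]

lemma sum_split {α : Type*} [Fintype α] [DecidableEq α] (a : α) (g : α → ℝ) :
    ∑ x, g x = g a + ∑ x : {x // x ≠ a}, g x.1 := by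
  have h := Finset.sum_subtype (p := fun x => x ≠ a) (F := inferInstance) (Finset.univ.erase a)
    (fun x => by simp) g
  rw [← h, Finset.add_sum_erase _ g (Finset.mem_univ a)]

/-- Harmonic mean / Hotelling identity: with `N = 2^m` cells of positive probabilities
summing to 1, `μ` the mean vector of the `N-1` nontrivial interactions and `Σ_μ` their
second moment matrix, `(1/N²) ∑_k p_k⁻¹ = 1 + μ^T (Σ_μ - μμ^T)⁻¹ μ`. -/
theorem harmonic_mean_covariance (m : ℕ)
    (p : (Fin m → Bool) → ℝ) (hpos : ∀ k, 0 < p k) (hsum : ∑ k, p k = 1)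
    (μ : {S : Fin m → Bool // S ≠ fun _ => false} → ℝ)
    (hμ : ∀ S, μ S = ((sylvesterHadamard m).mulVec p) S.1)
    (Sig : Matrix {S : Fin m → Bool // S ≠ fun _ => false}
      {S : Fin m → Bool // S ≠ fun _ => false} ℝ)
    (hSig : ∀ S T, Sig S T =
      (sylvesterHadamard m * Matrix.diagonal p * sylvesterHadamard m) S.1 T.1) :
    (1 / ((2 : ℝ) ^ m) ^ 2) * ∑ k, (p k)⁻¹ = 1 + μ ⬝ᵥ (Sig - Matrix.vecMulVec μ μ)⁻¹.mulVec μ := by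
  set H := sylvesterHadamard m with hH
  set q : (Fin m → Bool) → ℝ := fun k => (p k)⁻¹ with hq
  set N : ℝ := (2:ℝ)^m with hN
  have hN0 : N ≠ 0 := by positivity
  set M : Matrix (Fin m → Bool) (Fin m → Bool) ℝ := H * Matrix.diagonal p * H with hM
  set M' : Matrix (Fin m → Bool) (Fin m → Bool) ℝ := (N^2)⁻¹ • (H * Matrix.diagonal q * H) with hM'
  have hHH := SH_mul_self m
  have key : ∀ (A B : Matrix (Fin m → Bool) (Fin m → Bool) ℝ),
      (H * A * H) * (H * B * H) = N • (H * (A * B) * H) := by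
    intro A B
    calc (H * A * H) * (H * B * H) = H * (A * ((H * H) * (B * H))) := by
          simp only [Matrix.mul_assoc]
      _ = H * (A * (((2:ℝ)^m • (1 : Matrix (Fin m → Bool) (Fin m → Bool) ℝ)) * (B * H))) := by
          rw [hH, hHH]
      _ = N • (H * (A * B) * H) := by
          rw [← hN]
          simp only [Matrix.smul_mul, Matrix.mul_smul, Matrix.one_mul, Matrix.mul_assoc]
  have hdpq : Matrix.diagonal p * Matrix.diagonal q = 1 := by
    rw [Matrix.diagonal_mul_diagonal]
    convert Matrix.diagonal_one with k
    exact mul_inv_cancel₀ (hpos k).ne'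
  have hdqp : Matrix.diagonal q * Matrix.diagonal p = 1 := by
    rw [Matrix.diagonal_mul_diagonal]
    convert Matrix.diagonal_one with k
    exact inv_mul_cancel₀ (hpos k).ne'
  have hscal : (N^2)⁻¹ * N * N = 1 := by
    rw [mul_assoc, ← sq, inv_mul_cancel₀ (pow_ne_zero 2 hN0)]
  have hMM' : M * M' = 1 := by
    rw [hM, hM', Matrix.mul_smul, key, hdpq, Matrix.mul_one, hH, hHH, ← hN,
      smul_smul, smul_smul, hscal, one_smul]
  have hM'M : M' * M = 1 := by
    rw [hM, hM', Matrix.smul_mul, key, hdqp, Matrix.mul_one, hH, hHH, ← hN,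
      smul_smul, smul_smul, hscal, one_smul]
  have hMe : ∀ S T, M S T = ∑ k, H S k * p k * H k T := by
    intro S T
    rw [hM, Matrix.mul_apply]
    simp [Matrix.mul_diagonal]
  have hM'e : ∀ S T, M' S T = (N^2)⁻¹ * ∑ k, H S k * q k * H k T := by
    intro S T
    rw [hM', Matrix.smul_apply, Matrix.mul_apply, smul_eq_mul]
    simp [Matrix.mul_diagonal]
  have hM00 : M (fun _ => false : Fin m → Bool) (fun _ => false : Fin m → Bool) = 1 := by
    rw [hMe]
    simp only [hH, SH_zero, SH_zero', one_mul, mul_one]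
    exact hsum
  have hμl : ∀ S : {S : Fin m → Bool // S ≠ fun _ => false}, M S.1 (fun _ => false : Fin m → Bool) = μ S := by
    intro S
    rw [hMe, hμ]
    simp only [hH, SH_zero', mul_one, Matrix.mulVec, dotProduct]
  have hμr : ∀ S : {S : Fin m → Bool // S ≠ fun _ => false}, M (fun _ => false : Fin m → Bool) S.1 = μ S := by
    intro S
    rw [hMe, hμ]
    simp only [hH, SH_zero, one_mul, Matrix.mulVec, dotProduct]
    exact Finset.sum_congr rfl fun k _ => by rw [mul_comm, SH_symm]
  have hMM'e : ∀ S T, ∑ U, M S U * M' U T = if S = T then (1:ℝ) else 0 := by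
    intro S T
    have := congrFun (congrFun hMM' S) T
    rwa [Matrix.mul_apply, Matrix.one_apply] at this
  have hM'Me : ∀ S T, ∑ U, M' S U * M U T = if S = T then (1:ℝ) else 0 := by
    intro S T
    have := congrFun (congrFun hM'M S) T
    rwa [Matrix.mul_apply, Matrix.one_apply] at this
  set B : Matrix {S : Fin m → Bool // S ≠ fun _ => false} {S : Fin m → Bool // S ≠ fun _ => false} ℝ :=
    Matrix.of fun S T => M' S.1 T.1 with hB
  have hCB : (Sig - Matrix.vecMulVec μ μ) * B = 1 := by
    ext S T
    rw [Matrix.mul_apply]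
    have hterm : ∀ u : {S : Fin m → Bool // S ≠ fun _ => false},
        (Sig - Matrix.vecMulVec μ μ) S u * B u T
          = (M S.1 u.1 - M S.1 (fun _ => false : Fin m → Bool) * M (fun _ => false : Fin m → Bool) u.1) * M' u.1 T.1 := by
      intro u
      rw [Matrix.sub_apply, Matrix.vecMulVec_apply, hSig S u, ← hμl S, ← hμr u]
      rfl
    rw [Finset.sum_congr rfl fun u _ => hterm u]
    have hsplit := sum_split (α := Fin m → Bool) (fun _ => false : Fin m → Bool)
      (fun U => (M S.1 U - M S.1 (fun _ => false : Fin m → Bool) * M (fun _ => false : Fin m → Bool) U) * M' U T.1)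
    have hzero : (M S.1 (fun _ => false : Fin m → Bool) - M S.1 (fun _ => false : Fin m → Bool) * M (fun _ => false : Fin m → Bool) (fun _ => false : Fin m → Bool)) * M' (fun _ => false : Fin m → Bool) T.1 = 0 := by
      rw [hM00]; ring
    rw [hzero, zero_add] at hsplit
    rw [← hsplit]
    have hlin : ∑ U, (M S.1 U - M S.1 (fun _ => false : Fin m → Bool) * M (fun _ => false : Fin m → Bool) U) * M' U T.1
        = (∑ U, M S.1 U * M' U T.1) - M S.1 (fun _ => false : Fin m → Bool) * ∑ U, M (fun _ => false : Fin m → Bool) U * M' U T.1 := by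
      rw [Finset.mul_sum, ← Finset.sum_sub_distrib]
      exact Finset.sum_congr rfl fun U _ => by ring
    rw [hlin, hMM'e, hMM'e]
    have hT : (fun _ => false : Fin m → Bool) ≠ T.1 := Ne.symm T.2
    rw [if_neg hT, Matrix.one_apply]
    by_cases h : S = T
    · subst h; simp
    · have hST : S.1 ≠ T.1 := fun hc => h (Subtype.ext hc)
      rw [if_neg hST, if_neg h]; ring
  rw [Matrix.inv_eq_right_inv hCB]
  have hinner : ∀ S : {S : Fin m → Bool // S ≠ fun _ => false},
      B.mulVec μ S = -(M' S.1 (fun _ => false : Fin m → Bool)) := by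
    intro S
    rw [Matrix.mulVec, dotProduct]
    have hterm : ∀ T : {S : Fin m → Bool // S ≠ fun _ => false},
        B S T * μ T = M' S.1 T.1 * M T.1 (fun _ => false : Fin m → Bool) := by
      intro T; rw [← hμl T]; rfl
    rw [Finset.sum_congr rfl fun T _ => hterm T]
    have hsplit := sum_split (α := Fin m → Bool) (fun _ => false : Fin m → Bool) (fun T => M' S.1 T * M T (fun _ => false : Fin m → Bool))
    have hfull : ∑ T, M' S.1 T * M T (fun _ => false : Fin m → Bool) = 0 := by
      rw [hM'Me, if_neg S.2]
    rw [hfull, hM00, mul_one] at hsplit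
    linarith [hsplit]
  have houter : μ ⬝ᵥ B.mulVec μ = M' (fun _ => false : Fin m → Bool) (fun _ => false : Fin m → Bool) - 1 := by
    rw [dotProduct]
    have hterm : ∀ S : {S : Fin m → Bool // S ≠ fun _ => false},
        μ S * B.mulVec μ S = -(M (fun _ => false : Fin m → Bool) S.1 * M' S.1 (fun _ => false : Fin m → Bool)) := by
      intro S; rw [hinner S, ← hμr S]; ring
    rw [Finset.sum_congr rfl fun S _ => hterm S]
    have hsplit := sum_split (α := Fin m → Bool) (fun _ => false : Fin m → Bool) (fun U => M (fun _ => false : Fin m → Bool) U * M' U (fun _ => false : Fin m → Bool))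
    have hfull : ∑ U, M (fun _ => false : Fin m → Bool) U * M' U (fun _ => false : Fin m → Bool) = 1 := by
      rw [hMM'e, if_pos rfl]
    rw [hM00, one_mul] at hsplit
    rw [hfull] at hsplit
    have : ∑ S : {S : Fin m → Bool // S ≠ fun _ => false}, -(M (fun _ => false : Fin m → Bool) S.1 * M' S.1 (fun _ => false : Fin m → Bool))
        = -∑ S : {S : Fin m → Bool // S ≠ fun _ => false}, M (fun _ => false : Fin m → Bool) S.1 * M' S.1 (fun _ => false : Fin m → Bool) := by
      rw [Finset.sum_neg_distrib]
    rw [this]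
    linarith [hsplit]
  rw [houter]
  have hM'00 : M' (fun _ => false : Fin m → Bool) (fun _ => false : Fin m → Bool) = (N^2)⁻¹ * ∑ k, (p k)⁻¹ := by
    rw [hM'e]
    congr 1
    exact Finset.sum_congr rfl fun k _ => by
      simp [hH, SH_zero, SH_zero', hq]
  rw [hM'00]
  rw [one_div]
  ring
end

section
/- Let N = 2^m and consider cell probabilities p = (1/N)·1 + H^{-1}(0, μ^T)^T determined by an interaction mean vector μ ∈ R^{N-1} (so that the uniform distribution corresponds to μ = 0). Let Σ_μ = (H diag(p) H)_{[-1,-1]} be the second moment matrix of the nontrivial interactions. Then for all μ with ‖μ‖_2 ≤ (N-1)^{-1/2}, the quadratic form satisfies ‖μ‖_2^2 - c‖μ‖_2^3 ≤ μ^T Σ_μ μ ≤ ‖μ‖_2^2 + c‖μ‖_2^3 with c = (N-2)/√(N-1). -/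
open Matrix Finset

lemma hadamard_symm (m : ℕ) (S T : Fin m → Bool) :
    sylvesterHadamard m S T = sylvesterHadamard m T S :=
  Finset.prod_congr rfl fun i _ => by simp [and_comm]

lemma hadamard_row_sum (m : ℕ) (S : Fin m → Bool) :
    ∑ k, sylvesterHadamard m S k = if S = (fun _ => false) then (2:ℝ)^m else 0 := by
  unfold sylvesterHadamard
  rw [← Fintype.piFinset_univ, ← Finset.prod_univ_sum (fun _ => (univ : Finset Bool))
    (fun i b => if S i ∧ b then (-1:ℝ) else 1)]
  by_cases h : S = fun _ => false
  · subst h; simp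
  · rw [if_neg h]
    obtain ⟨i, hi⟩ : ∃ i, S i = true := by
      by_contra hc; push_neg at hc
      exact h (funext fun i => by simpa using hc i)
    exact Finset.prod_eq_zero (mem_univ i) (by simp [hi])

lemma hadamard_mul_self (m : ℕ) (S T : Fin m → Bool) :
    ∑ k, sylvesterHadamard m S k * sylvesterHadamard m k T
      = if S = T then (2:ℝ)^m else 0 := by
  unfold sylvesterHadamard
  have h0 : ∀ k : Fin m → Bool,
      (∏ i, if S i ∧ k i then (-1:ℝ) else 1) * (∏ i, if k i ∧ T i then (-1:ℝ) else 1)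
      = ∏ i, ((if S i ∧ k i then (-1:ℝ) else 1) * (if k i ∧ T i then (-1:ℝ) else 1)) := by
    intro k; rw [Finset.prod_mul_distrib]
  simp_rw [h0]
  rw [← Fintype.piFinset_univ, ← Finset.prod_univ_sum (fun _ => (univ : Finset Bool))
    (fun i b => (if S i ∧ b then (-1:ℝ) else 1) * (if b ∧ T i then (-1:ℝ) else 1))]
  by_cases h : S = T
  · subst h
    rw [if_pos rfl]
    have h1 : ∀ i : Fin m, (∑ b : Bool,
        (if S i ∧ b then (-1:ℝ) else 1) * (if b ∧ S i then (-1:ℝ) else 1)) = 2 := by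
      intro i; cases hS : S i <;> norm_num
    rw [Finset.prod_congr rfl fun i _ => h1 i]
    simp
  · rw [if_neg h]
    obtain ⟨i, hi⟩ : ∃ i, S i ≠ T i := by
      by_contra hc; push_neg at hc; exact h (funext hc)
    refine Finset.prod_eq_zero (mem_univ i) ?_
    cases hS : S i <;> cases hT : T i <;> simp_all

lemma cubic_bound {K : Type*} [Fintype K] [DecidableEq K] (v : K → ℝ) (t : ℝ) (ht : 0 ≤ t)
    (hN : 2 ≤ Fintype.card K)
    (hsum : ∑ k, v k = 0)
    (hsq : ∑ k, v k ^ 2 = (Fintype.card K : ℝ) * t ^ 2) :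
    ∑ k, v k ^ 3 ≤ (Fintype.card K : ℝ) * ((Fintype.card K : ℝ) - 2)
      / Real.sqrt ((Fintype.card K : ℝ) - 1) * t ^ 3 := by
  set N : ℝ := (Fintype.card K : ℝ) with hNdef
  have hN2 : (2:ℝ) ≤ N := by rw [hNdef]; exact_mod_cast hN
  have hN1 : (1:ℝ) ≤ N - 1 := by linarith
  set r : ℝ := Real.sqrt (N - 1) with hrdef
  have hr2 : r ^ 2 = N - 1 := Real.sq_sqrt (by linarith)
  have hrpos : 0 < r := Real.sqrt_pos.mpr (by linarith)
  set a : ℝ := t * r with hadef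
  set d : ℝ := t / r with hddef
  have ha0 : 0 ≤ a := mul_nonneg ht hrpos.le
  have hva : ∀ k, v k ≤ a := by
    intro k
    have e1 := Finset.add_sum_erase univ v (mem_univ k)
    have e2 := Finset.add_sum_erase univ (fun j => v j ^ 2) (mem_univ k)
    have h1 : (∑ j ∈ univ.erase k, v j) = - v k := by linarith
    have h2 : (∑ j ∈ univ.erase k, v j ^ 2) = N * t ^ 2 - v k ^ 2 := by linarith
    have h3 := sq_sum_le_card_mul_sum_sq (s := univ.erase k) (f := v)
    rw [h1, h2, Finset.card_erase_of_mem (mem_univ k), Finset.card_univ] at h3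
    have hcard : ((Fintype.card K - 1 : ℕ) : ℝ) = N - 1 := by
      have h1 : (1:ℕ) ≤ Fintype.card K := by omega
      rw [Nat.cast_sub h1]; simp [hNdef]
    rw [hcard] at h3
    have haa : a ^ 2 = (N - 1) * t ^ 2 := by rw [hadef]; linear_combination t ^ 2 * hr2
    have h5 : v k ^ 2 ≤ a ^ 2 := by nlinarith [h3, haa, hN2, sq_nonneg (v k)]
    calc v k ≤ |v k| := le_abs_self _
      _ = Real.sqrt (v k ^ 2) := (Real.sqrt_sq_eq_abs _).symm
      _ ≤ Real.sqrt (a ^ 2) := Real.sqrt_le_sqrt h5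
      _ = a := Real.sqrt_sq ha0
  have hpt : ∀ k, v k ^ 3 ≤ (a - 2*d) * v k ^ 2 + (2*a*d - d^2) * v k + a * d^2 := by
    intro k
    nlinarith [mul_nonneg (sub_nonneg.mpr (hva k)) (sq_nonneg (v k + d))]
  calc ∑ k, v k ^ 3 ≤ ∑ k, ((a - 2*d) * v k ^ 2 + (2*a*d - d^2) * v k + a * d^2) :=
        Finset.sum_le_sum fun k _ => hpt k
    _ = (a - 2*d) * (N * t^2) + N * (a * d^2) := by
        rw [Finset.sum_add_distrib, Finset.sum_add_distrib, ← Finset.mul_sum, ← Finset.mul_sum,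
          hsum, hsq, Finset.sum_const, Finset.card_univ]
        ring
    _ = N * (N - 2) / r * t ^ 3 := by
        rw [hadef, hddef]
        field_simp
        linear_combination t^3 * hr2

lemma sum_subtype_ne (m : ℕ) (g : (Fin m → Bool) → ℝ) (hg : g (fun _ => false) = 0) :
    ∑ S : {S : Fin m → Bool // S ≠ fun _ => false}, g S.1 = ∑ S, g S := by
  rw [← Finset.sum_subtype (univ.filter (· ≠ fun _ => false)) (by simp) g,
    Finset.sum_filter]
  refine Finset.sum_congr rfl fun S _ => ?_
  by_cases h : S = fun _ => false
  · simp [h, hg]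
  · simp [h]

/-- Quadratic form bounds for weak signals: with cell probabilities
`p = (1/N)·1 + H⁻¹ (0, μ^T)^T` determined by an interaction mean vector `μ ∈ ℝ^{N-1}` and
`Σ_μ` the second moment matrix of the nontrivial interactions, if `‖μ‖₂ ≤ (N-1)^{-1/2}` then
`‖μ‖₂² - c‖μ‖₂³ ≤ μ^T Σ_μ μ ≤ ‖μ‖₂² + c‖μ‖₂³` with `c = (N-2)/√(N-1)`. -/
theorem quadratic_form_bounds (m : ℕ)
    (μ : {S : Fin m → Bool // S ≠ fun _ => false} → ℝ)
    (μfull : (Fin m → Bool) → ℝ)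
    (hμfull : ∀ S : Fin m → Bool,
      μfull S = if h : S = fun _ => false then 0 else μ ⟨S, h⟩)
    (p : (Fin m → Bool) → ℝ)
    (hp : p = (fun _ => 1 / (2 : ℝ) ^ m) + (sylvesterHadamard m)⁻¹.mulVec μfull)
    (Sig : Matrix {S : Fin m → Bool // S ≠ fun _ => false}
      {S : Fin m → Bool // S ≠ fun _ => false} ℝ)
    (hSig : ∀ S T, Sig S T =
      (sylvesterHadamard m * Matrix.diagonal p * sylvesterHadamard m) S.1 T.1)
    (nrm : ℝ) (hnrm : nrm = Real.sqrt (∑ S, μ S ^ 2))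
    (hsmall : nrm ≤ ((2 : ℝ) ^ m - 1) ^ (-(1 : ℝ) / 2))
    (c : ℝ) (hc : c = ((2 : ℝ) ^ m - 2) / Real.sqrt ((2 : ℝ) ^ m - 1)) :
    nrm ^ 2 - c * nrm ^ 3 ≤ μ ⬝ᵥ Sig.mulVec μ ∧
      μ ⬝ᵥ Sig.mulVec μ ≤ nrm ^ 2 + c * nrm ^ 3 := by
  rcases Nat.eq_zero_or_pos m with hm | hm
  · -- degenerate case m = 0
    subst hm
    haveI hempty : IsEmpty {S : Fin 0 → Bool // S ≠ fun _ => false} :=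
      ⟨fun ⟨S, hS⟩ => hS (funext fun i => i.elim0)⟩
    have h1 : μ ⬝ᵥ Sig.mulVec μ = 0 := by simp [dotProduct]
    have h2 : nrm = 0 := by rw [hnrm]; simp
    rw [h1, h2]; norm_num
  -- main case m ≥ 1
  set H := sylvesterHadamard m with hH
  have hNpos : (0:ℝ) < 2 ^ m := by positivity
  have hHH : ∀ S T, (H * H) S T = if S = T then (2:ℝ)^m else 0 := by
    intro S T; rw [Matrix.mul_apply]; exact hadamard_mul_self m S T
  have hinv : H⁻¹ = ((2:ℝ)^m)⁻¹ • H := by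
    apply Matrix.inv_eq_right_inv
    ext S T
    rw [Matrix.mul_smul, Matrix.smul_apply, hHH S T, smul_eq_mul]
    by_cases h : S = T <;> simp [h, Matrix.one_apply, hNpos.ne']
  have hμ0 : μfull (fun _ => false) = 0 := by rw [hμfull]; simp
  have hμeq : ∀ S : {S : Fin m → Bool // S ≠ fun _ => false}, μfull S.1 = μ S := by
    intro S; rw [hμfull, dif_neg S.2]
  set v : (Fin m → Bool) → ℝ := H.mulVec μfull with hv
  have hvecMul : Matrix.vecMul μfull H = v := by
    funext k
    rw [hv]
    simp only [Matrix.vecMul, Matrix.mulVec, dotProduct]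
    refine Finset.sum_congr rfl fun S _ => ?_
    rw [hH, hadamard_symm m k S]
    exact mul_comm _ _
  have hnrm0 : 0 ≤ nrm := hnrm ▸ Real.sqrt_nonneg _
  have hnrmsq : nrm ^ 2 = ∑ S, μ S ^ 2 := by rw [hnrm]; exact Real.sq_sqrt (by positivity)
  have hfullsq : ∑ S, μfull S ^ 2 = nrm ^ 2 := by
    rw [hnrmsq, ← sum_subtype_ne m (fun S => μfull S ^ 2) (by simp [hμ0])]
    exact Finset.sum_congr rfl fun S _ => by rw [hμeq]
  -- p in terms of v
  have hpk : ∀ k, p k = ((2:ℝ)^m)⁻¹ * (1 + v k) := by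
    intro k
    rw [hp]
    simp only [Pi.add_apply, hinv, Matrix.smul_mulVec, Pi.smul_apply, smul_eq_mul, ← hH,
      ← hv]
    rw [one_div]
    ring
  -- reduce quadratic form to full-index quadratic form
  have key1 : μ ⬝ᵥ Sig.mulVec μ = μfull ⬝ᵥ (H * Matrix.diagonal p * H).mulVec μfull := by
    simp only [dotProduct, Matrix.mulVec]
    rw [← sum_subtype_ne m
      (fun S => μfull S * ∑ T, (H * Matrix.diagonal p * H) S T * μfull T) (by simp [hμ0])]
    refine Finset.sum_congr rfl fun S _ => ?_
    rw [hμeq]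
    congr 1
    rw [← sum_subtype_ne m (fun T => (H * Matrix.diagonal p * H) S.1 T * μfull T)
      (by simp [hμ0])]
    exact Finset.sum_congr rfl fun T _ => by rw [hμeq, hSig]
  -- second moment identity
  have key2 : μfull ⬝ᵥ (H * Matrix.diagonal p * H).mulVec μfull = ∑ k, p k * v k ^ 2 := by
    rw [← Matrix.mulVec_mulVec, ← Matrix.mulVec_mulVec, Matrix.dotProduct_mulVec, hvecMul]
    have hdiag : (Matrix.diagonal p).mulVec v = fun k => p k * v k := by
      funext k
      simp [Matrix.mulVec, diagonal_dotProduct]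
    rw [← hv, hdiag]
    simp only [dotProduct]
    exact Finset.sum_congr rfl fun k _ => by ring
  have hv_sum : ∑ k, v k = 0 := by
    rw [hv]
    simp only [Matrix.mulVec, dotProduct]
    rw [Finset.sum_comm]
    refine Finset.sum_eq_zero fun S _ => ?_
    rw [← Finset.sum_mul]
    have : ∑ k, H k S = if S = (fun _ => false) then (2:ℝ)^m else 0 := by
      rw [← hadamard_row_sum m S]
      exact Finset.sum_congr rfl fun k _ => hadamard_symm m k S
    rw [this]
    by_cases h : S = fun _ => false
    · rw [if_pos h, h, hμ0]; ring
    · rw [if_neg h]; ring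
  have hv_sq : ∑ k, v k ^ 2 = (2:ℝ)^m * nrm ^ 2 := by
    have e1 : ∑ k, v k ^ 2 = v ⬝ᵥ v := by
      simp only [dotProduct]; exact Finset.sum_congr rfl fun k _ => (sq (v k)).symm ▸ by ring
    have e2 : μfull ⬝ᵥ (H * H).mulVec μfull = v ⬝ᵥ v := by
      rw [← Matrix.mulVec_mulVec, Matrix.dotProduct_mulVec, hvecMul, ← hv]
    rw [e1, ← e2]
    have e3 : (H * H) = ((2:ℝ)^m) • (1 : Matrix (Fin m → Bool) (Fin m → Bool) ℝ) := by
      ext S T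
      rw [hHH S T, Matrix.smul_apply, Matrix.one_apply, smul_eq_mul]
      by_cases h : S = T <;> simp [h]
    rw [e3, Matrix.smul_mulVec, Matrix.one_mulVec, ← hfullsq]
    simp only [dotProduct, Pi.smul_apply, smul_eq_mul, Finset.mul_sum]
    exact Finset.sum_congr rfl fun S _ => by ring
  -- the quadratic form equals nrm² + (2^m)⁻¹ ∑ v³
  have hquad : μ ⬝ᵥ Sig.mulVec μ = nrm ^ 2 + ((2:ℝ)^m)⁻¹ * ∑ k, v k ^ 3 := by
    rw [key1, key2]
    have : ∀ k, p k * v k ^ 2 = ((2:ℝ)^m)⁻¹ * v k ^ 2 + ((2:ℝ)^m)⁻¹ * v k ^ 3 := by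
      intro k; rw [hpk k]; ring
    rw [Finset.sum_congr rfl fun k _ => this k, Finset.sum_add_distrib, ← Finset.mul_sum,
      ← Finset.mul_sum, hv_sq]
    field_simp
  -- cardinality facts
  have hcard : (Fintype.card (Fin m → Bool) : ℝ) = (2:ℝ)^m := by
    simp [Fintype.card_fun]
  have hcard2 : 2 ≤ Fintype.card (Fin m → Bool) := by
    rw [Fintype.card_fun, Fintype.card_bool, Fintype.card_fin]
    exact le_trans (by norm_num) (Nat.pow_le_pow_right (by norm_num) hm)
  have hub := cubic_bound v nrm hnrm0 hcard2 hv_sum (by rw [hv_sq, hcard])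
  have hlb := cubic_bound (fun k => - v k) nrm hnrm0 hcard2
    (by simp [hv_sum])
    (by simp only [neg_sq]; rw [hv_sq, hcard])
  have hneg3 : ∑ k, (- v k) ^ 3 = - ∑ k, v k ^ 3 := by
    rw [← Finset.sum_neg_distrib]
    exact Finset.sum_congr rfl fun k _ => Odd.neg_pow ⟨1, by norm_num⟩ _
  rw [hcard] at hub hlb
  rw [hneg3] at hlb
  have hBc : (2:ℝ)^m * ((2:ℝ)^m - 2) / Real.sqrt ((2:ℝ)^m - 1) * nrm ^ 3
      = (2:ℝ)^m * (c * nrm ^ 3) := by rw [hc]; ring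
  rw [hBc] at hub hlb
  have hinvpos : (0:ℝ) < ((2:ℝ)^m)⁻¹ := by positivity
  have cancel : ((2:ℝ)^m)⁻¹ * ((2:ℝ)^m * (c * nrm ^ 3)) = c * nrm ^ 3 := by
    field_simp
  constructor
  · rw [hquad]
    linarith [mul_le_mul_of_nonneg_left hlb hinvpos.le, cancel]
  · rw [hquad]
    linarith [mul_le_mul_of_nonneg_left hub hinvpos.le, cancel]
end
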